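/- Let p be a prime and let G be a group. If the quotient G/Z(G) of G by its center is a finite p-group, then the commutator subgroup [G, G] is a finite p-group. -/

import Mathlib

open scoped commutatorElement

lemma comm_central_eq {G : Type*} [Group G] (g h z w : G)
    (hz : z ∈ Subgroup.center G) (hw : w ∈ Subgroup.center G) :
    ⁅g * z, h * w⁆ = ⁅g, h⁆ := by
  have cz : ∀ a : G, Commute z a := fun a => ((Subgroup.mem_center_iff.mp hz) a).symm
  have cw : ∀ a : G, Commute w a := fun a => ((Subgroup.mem_center_iff.mp hw) a).symm
  simp only [commutatorElement_def, mul_inv_rev, mul_assoc]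
  rw [(cz h).left_comm, (cz w).left_comm, ← mul_assoc z, mul_inv_cancel, one_mul,
    (cw g⁻¹).left_comm, ← mul_assoc w, mul_inv_cancel, one_mul]

/-- If `G/Z(G)` is a finite `p`-group, then the commutator subgroup `[G, G]` is a finite
`p`-group. -/
theorem commutator_finite_pGroup_of_pGroup_quotient_center
    {p : ℕ} (hp : p.Prime) {G : Type*} [Group G]
    (hfin : Finite (G ⧸ Subgroup.center G)) (hpgrp : IsPGroup p (G ⧸ Subgroup.center G)) :
    Finite ↥(commutator G) ∧ IsPGroup p ↥(commutator G) := by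
  classical
  -- commutatorSet is finite
  have hsurj : ∀ x ∈ commutatorSet G, ∃ a b : G ⧸ Subgroup.center G,
      ⁅a.out, b.out⁆ = x := by
    rintro x ⟨g, h, rfl⟩
    refine ⟨(g : G ⧸ Subgroup.center G), (h : G ⧸ Subgroup.center G), ?_⟩
    obtain ⟨z, hz, hz'⟩ : ∃ z ∈ Subgroup.center G,
        ((g : G ⧸ Subgroup.center G)).out = g * z := by
      have := QuotientGroup.mk_out_eq_mul (Subgroup.center G) g
      obtain ⟨z, hz⟩ := this
      exact ⟨z, z.2, hz⟩
    obtain ⟨w, hw, hw'⟩ : ∃ w ∈ Subgroup.center G,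
        ((h : G ⧸ Subgroup.center G)).out = h * w := by
      obtain ⟨w, hw⟩ := QuotientGroup.mk_out_eq_mul (Subgroup.center G) h
      exact ⟨w, w.2, hw⟩
    rw [hz', hw', comm_central_eq g h z w hz hw]
  have hfin' : (commutatorSet G).Finite := by
    apply Set.Finite.subset (Set.finite_range
      (fun ab : (G ⧸ Subgroup.center G) × (G ⧸ Subgroup.center G) => ⁅ab.1.out, ab.2.out⁆))
    intro x hx
    obtain ⟨a, b, hab⟩ := hsurj x hx
    exact ⟨(a, b), hab⟩
  have : Finite (commutatorSet G) := hfin'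
  have hfinc : Finite ↥(commutator G) := inferInstance
  refine ⟨hfinc, ?_⟩
  -- p-group
  have hdvd := Subgroup.card_commutator_dvd_index_center_pow (G := G)
  haveI := Fact.mk hp
  obtain ⟨k, hk⟩ := IsPGroup.iff_card.mp hpgrp
  have hindex : (Subgroup.center G).index = p ^ k := by
    rw [Subgroup.index, hk]
  rw [hindex, ← pow_mul] at hdvd
  obtain ⟨m, _, hm⟩ := (Nat.dvd_prime_pow hp).mp hdvd
  exact IsPGroup.of_card hm
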